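/- Let K_p, u_0, r_t be positive real numbers. The function y : [0, ∞) → ℝ defined by y(u) = (r_t·K_p) / ((r_t + K_p)·exp(u/u_0) − r_t) is positive on [0, ∞), satisfies y(0) = r_t, and satisfies the differential equation y′(u) = −(y(u)·(K_p + y(u)))/(K_p·u_0) for all u ≥ 0. -/

import Mathlib

/-- explicit solution of the comparison ODE for the feedback controller. -/
theorem stmt_9 (Kp u0 rt : ℝ) (hKp : 0 < Kp) (hu0 : 0 < u0) (hrt : 0 < rt) :
    let y : ℝ → ℝ := fun u => rt * Kp / ((rt + Kp) * Real.exp (u / u0) - rt)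
    (∀ u ≥ (0:ℝ), 0 < y u) ∧ y 0 = rt ∧
    (∀ u ≥ (0:ℝ), HasDerivAt y (-(y u * (Kp + y u)) / (Kp * u0)) u) := by
  intro y
  have hden : ∀ u ≥ (0:ℝ), 0 < (rt + Kp) * Real.exp (u / u0) - rt := by
    intro u hu
    have h1 : (1:ℝ) ≤ Real.exp (u / u0) := Real.one_le_exp (by positivity)
    nlinarith [Real.exp_pos (u / u0)]
  refine ⟨fun u hu => div_pos (by positivity) (hden u hu), ?_, ?_⟩
  · simp only [y, zero_div, Real.exp_zero, mul_one]
    field_simp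
    simp [hKp.ne']
  · intro u hu
    have hD : ((rt + Kp) * Real.exp (u / u0) - rt) ≠ 0 := ne_of_gt (hden u hu)
    have hde : HasDerivAt (fun u => (rt + Kp) * Real.exp (u / u0) - rt)
        ((rt + Kp) * Real.exp (u / u0) * (1 / u0)) u := by
      have h := (Real.hasDerivAt_exp (u / u0)).comp u
        ((hasDerivAt_id u).div_const u0)
      simpa [mul_assoc] using ((h.const_mul (rt + Kp)).sub_const rt)
    have h : HasDerivAt (fun x => rt * Kp / ((rt + Kp) * Real.exp (x / u0) - rt)) _ u :=
      (hasDerivAt_const u (rt * Kp)).div hde hD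
    convert h using 1
    simp only [y]
    field_simp
    ring
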